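/- Extra disjoint path from a single connection (Lemma 4.21). Let W ⊆ ℤ^d, y ∈ ℤ^d, and let E be a finite nonempty set of edges. Then, as an inclusion of events (i.e., for every configuration ω): {E is occupied} ∩ {W ↔ y} ⊆ ({E is occupied} ∘ {y ↔ E}) ∪ ({E is occupied} ∘ {W ↔ y}). -/

import Mathlib

/-- The vertex set of the hypercubic lattice `ℤ^d`. -/
abbrev Vtx (d : ℕ) := Fin d → ℤ

/-- A bond percolation configuration: each (unordered) pair of vertices is
occupied (`true`) or vacant (`false`). -/
abbrev BondConfig (d : ℕ) := Sym2 (Vtx d) → Bool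

/-- The Euclidean norm of a point of `ℤ^d`. -/
noncomputable def znorm {d : ℕ} (x : Vtx d) : ℝ :=
  Real.sqrt (∑ i, ((x i : ℝ)) ^ 2)

/-- The edge between `a` and `b` is occupied (an edge requires `a ≠ b`). -/
def occEdge {d : ℕ} (ω : BondConfig d) (a b : Vtx d) : Prop :=
  a ≠ b ∧ ω s(a, b) = true

/-- `a` and `b` are joined by a path of occupied edges (`a ↔ b`);
`a ↔ a` always holds. -/
def Conn {d : ℕ} (ω : BondConfig d) (a b : Vtx d) : Prop :=
  Relation.ReflTransGen (occEdge ω) a b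

/-- The connection event `{a ↔ b}`. -/
def ConnEvent {d : ℕ} (a b : Vtx d) : Set (BondConfig d) :=
  {ω | Conn ω a b}

/-- The event `{A ↔ b}` that some vertex of `A` is connected to `b`. -/
def ConnToSet {d : ℕ} (A : Set (Vtx d)) (b : Vtx d) : Set (BondConfig d) :=
  {ω | ∃ a ∈ A, Conn ω a b}

/-- Disjoint occurrence `A ∘ B` of two events. -/
def DisjOcc {d : ℕ} (A B : Set (BondConfig d)) : Set (BondConfig d) :=
  {ω | ∃ B₁ B₂ : Set (Sym2 (Vtx d)), Disjoint B₁ B₂ ∧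
    (∀ ω' : BondConfig d, (∀ e ∈ B₁, ω' e = ω e) → ω' ∈ A) ∧
    (∀ ω' : BondConfig d, (∀ e ∈ B₂, ω' e = ω e) → ω' ∈ B)}

/-- The event `{W ⇔ u} = ⋃_{w, w' ∈ W} {w ↔ u} ∘ {w' ↔ u}`. -/
def WDouble {d : ℕ} (W : Set (Vtx d)) (u : Vtx d) : Set (BondConfig d) :=
  ⋃ (w ∈ W) (w' ∈ W), DisjOcc (ConnEvent w u) (ConnEvent w' u)

/-- The event that every edge of the finite edge set `E` is occupied. -/
def occupiedEvent {d : ℕ} (E : Finset (Sym2 (Vtx d))) : Set (BondConfig d) :=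
  {ω | ∀ e ∈ E, ω e = true}

/-- `V(E)`: the set of endpoints of the edges of `E`. -/
def edgeVerts {d : ℕ} (E : Finset (Sym2 (Vtx d))) : Set (Vtx d) :=
  {v | ∃ e ∈ E, v ∈ e}


open Relation

/-- Auxiliary: occupied edge avoiding the edge set `E`. -/
def AvoidRel {d : ℕ} (ω : BondConfig d) (E : Finset (Sym2 (Vtx d))) (u v : Vtx d) : Prop :=
  occEdge ω u v ∧ s(u, v) ∉ E

lemma occEdge_symm {d : ℕ} {ω : BondConfig d} : Symmetric (occEdge ω) := by
  intro u v h
  exact ⟨h.1.symm, by rw [Sym2.eq_swap]; exact h.2⟩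

lemma avoid_symm {d : ℕ} {ω : BondConfig d} {E : Finset (Sym2 (Vtx d))} :
    Symmetric (AvoidRel ω E) := by
  intro u v h
  exact ⟨occEdge_symm h.1, by rw [Sym2.eq_swap]; exact h.2⟩

lemma extract_avoid {d : ℕ} (ω : BondConfig d) (E : Finset (Sym2 (Vtx d))) {y w : Vtx d}
    (h : Conn ω y w) :
    ReflTransGen (AvoidRel ω E) y w ∨
      ∃ v ∈ edgeVerts E, ReflTransGen (AvoidRel ω E) y v := by
  induction h with
  | refl => exact Or.inl ReflTransGen.refl
  | @tail b c _ hbc ih =>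
    rcases ih with h | h
    · by_cases he : s(b, c) ∈ E
      · exact Or.inr ⟨b, ⟨s(b, c), he, Sym2.mem_mk_left b c⟩, h⟩
      · exact Or.inl (h.tail ⟨hbc, he⟩)
    · exact Or.inr h

lemma avoid_transfer {d : ℕ} {ω ω' : BondConfig d} {E : Finset (Sym2 (Vtx d))} {a b : Vtx d}
    (hag : ∀ e ∈ {e : Sym2 (Vtx d) | e ∉ E ∧ ω e = true}, ω' e = ω e)
    (h : ReflTransGen (AvoidRel ω E) a b) : Conn ω' a b := by
  refine ReflTransGen.mono ?_ _ _ h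
  rintro u v ⟨⟨hne, hocc⟩, hnotE⟩
  exact ⟨hne, by rw [hag s(u, v) ⟨hnotE, hocc⟩]; exact hocc⟩

/-- **Extra disjoint path from a single connection** (Lemma 4.21).
If all edges of `E` are occupied and `{W ↔ y}` occurs, then one can extract
an extra disjoint connection, either from `y` to `V(E)` or from `W` to `y`. -/
theorem extra_path_from_single_connection
    {d : ℕ} (W : Set (Vtx d)) (y : Vtx d)
    (E : Finset (Sym2 (Vtx d))) (hE : E.Nonempty)
    (hEnd : ∀ e ∈ E, ¬ e.IsDiag) :
    occupiedEvent E ∩ ConnToSet W y ⊆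
      DisjOcc (occupiedEvent E) (ConnToSet (edgeVerts E) y) ∪
        DisjOcc (occupiedEvent E) (ConnToSet W y) := by
  rintro ω ⟨hocc, w, hw, hconn⟩
  by_cases hA : ∃ w ∈ W, ReflTransGen (AvoidRel ω E) w y
  · right
    obtain ⟨w', hw', hpath⟩ := hA
    refine ⟨↑E, {e | e ∉ E ∧ ω e = true}, ?_, ?_, ?_⟩
    · rw [Set.disjoint_left]
      rintro e he ⟨hne, -⟩
      exact hne he
    · intro ω' hag e he
      rw [hag e he]
      exact hocc e he
    · intro ω' hag
      exact ⟨w', hw', avoid_transfer hag hpath⟩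
  · left
    have hsym : Conn ω y w := (@ReflTransGen.stdSymm _ _ ⟨fun _ _ h => occEdge_symm h⟩).symm _ _ hconn
    rcases extract_avoid ω E hsym with h | ⟨v, hv, hpath⟩
    · exact absurd ⟨w, hw, (@ReflTransGen.stdSymm _ _ ⟨fun _ _ h => avoid_symm h⟩).symm _ _ h⟩ hA
    · refine ⟨↑E, {e | e ∉ E ∧ ω e = true}, ?_, ?_, ?_⟩
      · rw [Set.disjoint_left]
        rintro e he ⟨hne, -⟩
        exact hne he
      · intro ω' hag e he
        rw [hag e he]
        exact hocc e he
      · intro ω' hag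
        exact ⟨v, hv, (@ReflTransGen.stdSymm _ _ ⟨fun _ _ h => occEdge_symm h⟩).symm _ _ (avoid_transfer hag hpath)⟩
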